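/- Let δ(A) = α·|A| − |E(A)| be the predimension with α > 0. For finite graphs A ⊆ B define A ≤* B (self-sufficiency) to mean δ(A) ≤ δ(B') for all B' with A ⊆ B' ⊆ B. Then self-sufficiency is transitive: if A ≤* B and B ≤* C then A ≤* C. -/
import Mathlib


def edgeCount {V : Type*} [Fintype V] [DecidableEq V] (G : SimpleGraph V)
    [DecidableRel G.Adj] (s : Finset V) : ℕ :=
  (G.edgeFinset ∩ s.sym2).card

noncomputable def pdim {V : Type*} [Fintype V] [DecidableEq V] (α : ℝ) (G : SimpleGraph V)
    [DecidableRel G.Adj] (s : Finset V) : ℝ :=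
  α * s.card - edgeCount G s

/-- `A ≤* B` : self-sufficiency of `A` in `B`. -/
def leqStar {V : Type*} [Fintype V] [DecidableEq V] (α : ℝ) (G : SimpleGraph V)
    [DecidableRel G.Adj] (A B : Finset V) : Prop :=
  A ⊆ B ∧ ∀ B' : Finset V, A ⊆ B' → B' ⊆ B → pdim α G A ≤ pdim α G B'

lemma edgeCount_supermodular {V : Type*} [Fintype V] [DecidableEq V] (G : SimpleGraph V)
    [DecidableRel G.Adj] (s t : Finset V) :
    edgeCount G s + edgeCount G t ≤ edgeCount G (s ∪ t) + edgeCount G (s ∩ t) := by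
  unfold edgeCount
  have h1 : (G.edgeFinset ∩ s.sym2) ∪ (G.edgeFinset ∩ t.sym2) ⊆
      G.edgeFinset ∩ (s ∪ t).sym2 := by
    intro e he
    rcases Finset.mem_union.mp he with h | h <;>
      exact Finset.mem_inter.mpr ⟨(Finset.mem_inter.mp h).1,
        Finset.sym2_mono (by simp) (Finset.mem_inter.mp h).2⟩
  have h2 : (G.edgeFinset ∩ s.sym2) ∩ (G.edgeFinset ∩ t.sym2) =
      G.edgeFinset ∩ (s ∩ t).sym2 := by
    ext e
    induction e with
    | h x y =>
      simp [Finset.mk_mem_sym2_iff]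
      tauto
  calc (G.edgeFinset ∩ s.sym2).card + (G.edgeFinset ∩ t.sym2).card
      = ((G.edgeFinset ∩ s.sym2) ∪ (G.edgeFinset ∩ t.sym2)).card +
        ((G.edgeFinset ∩ s.sym2) ∩ (G.edgeFinset ∩ t.sym2)).card :=
        (Finset.card_union_add_card_inter _ _).symm
    _ ≤ (G.edgeFinset ∩ (s ∪ t).sym2).card + (G.edgeFinset ∩ (s ∩ t).sym2).card := by
        rw [h2]
        exact Nat.add_le_add_right (Finset.card_le_card h1) _

lemma pdim_submodular {V : Type*} [Fintype V] [DecidableEq V] (G : SimpleGraph V)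
    [DecidableRel G.Adj] (α : ℝ) (s t : Finset V) :
    pdim α G (s ∪ t) + pdim α G (s ∩ t) ≤ pdim α G s + pdim α G t := by
  unfold pdim
  have hc : ((s ∪ t).card : ℝ) + (s ∩ t).card = s.card + t.card := by
    have := Finset.card_union_add_card_inter s t
    exact_mod_cast congrArg (Nat.cast : ℕ → ℝ) this
  have he := edgeCount_supermodular G s t
  have he' : (edgeCount G s : ℝ) + edgeCount G t ≤
      edgeCount G (s ∪ t) + edgeCount G (s ∩ t) := by exact_mod_cast he
  have hm : α * ((s ∪ t).card : ℝ) + α * (s ∩ t).card = α * s.card + α * t.card := by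
    rw [← mul_add, hc, mul_add]
  linarith

/-- Self-sufficiency is transitive. -/
theorem leqStar_trans {V : Type*} [Fintype V] [DecidableEq V] (G : SimpleGraph V)
    [DecidableRel G.Adj] (α : ℝ) (hα : 0 < α) (A B C : Finset V)
    (hAB : leqStar α G A B) (hBC : leqStar α G B C) : leqStar α G A C := by
  obtain ⟨hABsub, hABle⟩ := hAB
  obtain ⟨hBCsub, hBCle⟩ := hBC
  refine ⟨hABsub.trans hBCsub, fun B' hAB' hB'C => ?_⟩
  have h1 : pdim α G A ≤ pdim α G (B' ∩ B) :=
    hABle _ (Finset.subset_inter hAB' hABsub) Finset.inter_subset_right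
  have h2 : pdim α G B ≤ pdim α G (B' ∪ B) :=
    hBCle _ Finset.subset_union_right (Finset.union_subset hB'C hBCsub)
  have h3 := pdim_submodular G α B' B
  linarith
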